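/- Let P = (≻_1,…,≻_n) be an n-voter profile over a finite set A of m alternatives, let δ_1,…,δ_n ≥ 0 be integers, and let x,y ∈ A be distinct. Then the minimum of D_Q(x,y) over all feasible profiles Q equals Σ_{i=1}^n v_i, where v_i = −1 if y ≻_i x or rank(≻_i,y) − rank(≻_i,x) ≤ δ_i, and v_i = +1 otherwise. -/

import Mathlib

open Finset

abbrev Pref (A : Type*) [Fintype A] := A ≃ Fin (Fintype.card A)

def prefers {A : Type*} [Fintype A] (p : Pref A) (x y : A) : Prop := p x < p y

instance {A : Type*} [Fintype A] (p : Pref A) (x y : A) : Decidable (prefers p x y) := by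
  unfold prefers; infer_instance

def rank {A : Type*} [Fintype A] (p : Pref A) (a : A) : ℕ := (p a : ℕ) + 1

def dKT {A : Type*} [Fintype A] (p q : Pref A) : ℕ :=
  (univ.filter (fun z : A × A => prefers p z.1 z.2 ∧ prefers q z.2 z.1)).card

def margin {A : Type*} [Fintype A] {n : ℕ} (P : Fin n → Pref A) (x y : A) : ℤ :=
  ((univ.filter (fun i => prefers (P i) x y)).card : ℤ) -
  ((univ.filter (fun i => prefers (P i) y x)).card : ℤ)

def Sk {A : Type*} [Fintype A] {n : ℕ} (k : ℕ) (P : Fin n → Pref A) (a : A) : ℕ :=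
  (univ.filter (fun i => ((P i) a : ℕ) < k)).card

noncomputable def buckLevel {A : Type*} [Fintype A] {n : ℕ} (P : Fin n → Pref A) : ℕ :=
  sInf {k : ℕ | ∃ a : A, n < 2 * Sk k P a}

def movePerm : {m : ℕ} → Fin m → Fin m → Equiv.Perm (Fin m)
  | 0, i, _ => i.elim0
  | _ + 1, i, j => (finSuccEquiv' i).trans (finSuccEquiv' j).symm

def RS {A : Type*} [Fintype A] (p : Pref A) (a : A) (k : ℕ) : Pref A :=
  p.trans (movePerm (p a) ⟨min ((p a : ℕ) + k) (Fintype.card A - 1),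
    lt_of_le_of_lt (min_le_right _ _) (Nat.sub_lt (Fin.pos (p a)) one_pos)⟩)

def LS {A : Type*} [Fintype A] (p : Pref A) (a : A) (k : ℕ) : Pref A :=
  p.trans (movePerm (p a) ⟨(p a : ℕ) - k,
    lt_of_le_of_lt (Nat.sub_le _ _) (p a).isLt⟩)

def feasSet {A : Type*} [Fintype A] [DecidableEq A] (p : Pref A) (δ : ℕ) : Finset (Pref A) :=
  univ.filter (fun q => dKT p q ≤ δ)

lemma dKT_self {A : Type*} [Fintype A] (p : Pref A) : dKT p p = 0 := by
  rw [dKT, Finset.card_eq_zero, Finset.filter_eq_empty_iff]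
  rintro z -
  rintro ⟨h1, h2⟩
  exact absurd ((show p z.1 < p z.2 from h1).trans h2) (lt_irrefl _)

lemma feasSet_nonempty {A : Type*} [Fintype A] [DecidableEq A] (p : Pref A) (δ : ℕ) :
    (feasSet p δ).Nonempty :=
  ⟨p, by simp [feasSet, dKT_self]⟩

/-- cycle permutation sending `i` to `j` (for `j ≤ i`) and shifting `[j, i)` up by one. -/
def cycFun {m : ℕ} (i j : Fin m) (a : Fin m) : Fin m :=
  if a = i then j else
    if h : (j : ℕ) ≤ a ∧ (a : ℕ) < i then ⟨(a : ℕ) + 1, lt_of_le_of_lt h.2 i.isLt⟩ else a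

lemma cycFun_val {m : ℕ} (i j : Fin m) (a : Fin m) :
    ((cycFun i j a : Fin m) : ℕ) =
      if (a : ℕ) = i then (j : ℕ) else if (j : ℕ) ≤ a ∧ (a : ℕ) < i then (a : ℕ) + 1 else (a : ℕ) := by
  rw [cycFun]
  rcases eq_or_ne a i with rfl | hne
  · simp
  · rw [if_neg hne, if_neg (fun hh => hne (Fin.ext hh))]
    split_ifs with h
    · rfl
    · rfl

noncomputable def cyc {m : ℕ} (i j : Fin m) (hji : (j : ℕ) ≤ (i : ℕ)) : Equiv.Perm (Fin m) :=
  Equiv.ofBijective (cycFun i j)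
    (Finite.injective_iff_bijective.mp (by
      intro a b hab
      have hi := i.isLt
      have ha := a.isLt
      have hb := b.isLt
      have h2 := congrArg Fin.val hab
      rw [cycFun_val, cycFun_val] at h2
      apply Fin.ext
      split_ifs at h2 <;> omega))

lemma cyc_val {m : ℕ} (i j : Fin m) (hji : (j : ℕ) ≤ (i : ℕ)) (a : Fin m) :
    (((cyc i j hji) a : Fin m) : ℕ) =
      if (a : ℕ) = i then (j : ℕ) else if (j : ℕ) ≤ a ∧ (a : ℕ) < i then (a : ℕ) + 1 else (a : ℕ) :=
  cycFun_val i j a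

lemma prefers_of_not {A : Type*} [Fintype A] (p : Pref A) {x y : A} (hxy : x ≠ y)
    (h : ¬ prefers p y x) : prefers p x y := by
  have hne : ((p x : Fin _) : ℕ) ≠ (p y : ℕ) :=
    Fin.val_ne_of_ne (fun h => hxy (p.injective h))
  simp only [prefers, Fin.lt_def] at h ⊢
  omega

lemma dKT_ge {A : Type*} [Fintype A] [DecidableEq A] (p q : Pref A) {x y : A}
    (hp : prefers p x y) (hq : prefers q y x) :
    ((p y : ℕ) - (p x : ℕ)) ≤ dKT p q := by
  classical
  set S : Finset A := univ.filter (fun z => (p x : ℕ) ≤ (p z : ℕ) ∧ (p z : ℕ) < (p y : ℕ)) with hS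
  have hcard : S.card = (p y : ℕ) - (p x : ℕ) := by
    have himg : S.image (fun z => ((p z : Fin _) : ℕ)) = Finset.Ico (p x : ℕ) (p y : ℕ) := by
      ext k
      simp only [hS, Finset.mem_image, Finset.mem_filter, Finset.mem_univ, true_and,
        Finset.mem_Ico]
      constructor
      · rintro ⟨z, ⟨h1, h2⟩, rfl⟩
        exact ⟨h1, h2⟩
      · rintro ⟨h1, h2⟩
        refine ⟨p.symm ⟨k, lt_trans h2 (p y).isLt⟩, ?_⟩
        rw [Equiv.apply_symm_apply]
        exact ⟨⟨h1, h2⟩, rfl⟩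
    have hinj : Set.InjOn (fun z => ((p z : Fin _) : ℕ)) S := by
      intro a _ b _ h
      exact p.injective (Fin.ext h)
    rw [← Finset.card_image_of_injOn hinj, himg, Nat.card_Ico]
  rw [← hcard, dKT]
  apply Finset.card_le_card_of_injOn
    (fun z => if prefers q y z then (z, y) else (x, z))
  · intro z hz
    simp only [hS, Finset.mem_coe, Finset.mem_filter] at hz
    obtain ⟨-, hz1, hz2⟩ := hz
    by_cases hb : prefers q y z
    · beta_reduce; rw [if_pos hb]
      simp only [Finset.mem_coe, Finset.mem_filter, Finset.mem_univ, true_and]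
      exact ⟨show (p z : Fin _) < p y from Fin.lt_def.mpr hz2, hb⟩
    · beta_reduce; rw [if_neg hb]
      simp only [Finset.mem_coe, Finset.mem_filter, Finset.mem_univ, true_and]
      have hzx : z ≠ x := by
        rintro rfl; exact hb hq
      have hxz : prefers p x z := by
        simp only [prefers, Fin.lt_def]
        rcases lt_or_eq_of_le hz1 with h | h
        · exact h
        · exact absurd (p.injective (Fin.ext h)).symm hzx
      refine ⟨hxz, ?_⟩
      have hzny : z ≠ y := by
        rintro rfl
        exact absurd hz2 (lt_irrefl _)
      have hzy : prefers q z y := prefers_of_not q hzny hb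
      exact lt_trans hzy hq
  · intro z1 h1 z2 h2 heq
    simp only [hS, Finset.coe_filter, Finset.mem_univ, true_and, Set.mem_setOf_eq] at h1 h2
    have hy1 : z1 ≠ y := by
      rintro rfl; omega
    have hy2 : z2 ≠ y := by
      rintro rfl; omega
    by_cases hb1 : prefers q y z1 <;> by_cases hb2 : prefers q y z2 <;>
      simp only [if_pos, if_neg, hb1, hb2, if_true, if_false, Prod.mk.injEq] at heq
    · exact heq.1
    · exact absurd heq.2.symm hy2
    · exact absurd heq.2 hy1
    · exact heq.2

lemma exists_flip {A : Type*} [Fintype A] [DecidableEq A] (p : Pref A) {x y : A}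
    (hp : prefers p x y) :
    ∃ q : Pref A, prefers q y x ∧ dKT p q ≤ (p y : ℕ) - (p x : ℕ) := by
  classical
  have hji : ((p x : Fin _) : ℕ) ≤ ((p y : Fin _) : ℕ) := le_of_lt hp
  refine ⟨p.trans (cyc (p y) (p x) hji), ?_, ?_⟩
  · simp only [prefers, Fin.lt_def, Equiv.trans_apply]
    rw [cyc_val, cyc_val]
    have hlt : (p x : ℕ) < (p y : ℕ) := hp
    rw [if_pos rfl, if_neg (by omega), if_pos ⟨le_refl _, hlt⟩]
    omega
  · rw [dKT]
    have hbound : ((p y : ℕ) - (p x : ℕ)) = (Finset.Ico (p x : ℕ) (p y : ℕ)).card := by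
      rw [Nat.card_Ico]
    rw [hbound]
    apply Finset.card_le_card_of_injOn (fun z => ((p z.1 : Fin _) : ℕ))
    · rintro ⟨a, b⟩ hab
      simp only [Finset.mem_coe, Finset.mem_filter, Finset.mem_univ, true_and] at hab
      obtain ⟨h1, h2⟩ := hab
      simp only [prefers, Fin.lt_def, Equiv.trans_apply] at h1 h2
      rw [cyc_val, cyc_val] at h2
      have hlt : (p x : ℕ) < (p y : ℕ) := hp
      have hia := (p a).isLt
      have hib := (p b).isLt
      show ((p a : Fin _) : ℕ) ∈ Finset.Ico ((p x : Fin _) : ℕ) ((p y : Fin _) : ℕ)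
      rw [Finset.mem_Ico]
      split_ifs at h2 <;> omega
    · rintro ⟨a, b⟩ hab ⟨c, d⟩ hcd heq
      simp only [Finset.mem_coe, Finset.mem_filter, Finset.mem_univ, true_and] at hab hcd
      obtain ⟨ha1, ha2⟩ := hab
      obtain ⟨hc1, hc2⟩ := hcd
      simp only [prefers, Fin.lt_def, Equiv.trans_apply] at ha1 ha2 hc1 hc2
      rw [cyc_val, cyc_val] at ha2
      rw [cyc_val, cyc_val] at hc2
      have hlt : (p x : ℕ) < (p y : ℕ) := hp
      have hby : (p b : ℕ) = (p y : ℕ) := by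
        split_ifs at ha2 <;> omega
      have hdy : (p d : ℕ) = (p y : ℕ) := by
        split_ifs at hc2 <;> omega
      have hac : a = c := p.injective (Fin.ext heq)
      have hbd : b = d := p.injective (Fin.ext (by omega))
      simp [hac, hbd]

lemma margin_eq_sum {A : Type*} [Fintype A] {n : ℕ} (Q : Fin n → Pref A) {x y : A}
    (hxy : x ≠ y) :
    margin Q x y = ∑ i, if prefers (Q i) y x then (-1 : ℤ) else 1 := by
  classical
  have h : ∀ i, ¬ prefers (Q i) y x ↔ prefers (Q i) x y := by
    intro i
    constructor
    · exact prefers_of_not (Q i) hxy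
    · intro h1 h2
      exact absurd (show (Q i) x < (Q i) x from lt_trans h1 h2) (lt_irrefl _)
  have e1 : ∑ i ∈ univ.filter (fun i => prefers (Q i) y x),
      (if prefers (Q i) y x then (-1 : ℤ) else 1)
      = -((univ.filter (fun i => prefers (Q i) y x)).card : ℤ) := by
    rw [Finset.sum_congr rfl (fun i hi => if_pos (Finset.mem_filter.mp hi).2)]
    simp
  have e2 : ∑ i ∈ univ.filter (fun i => ¬ prefers (Q i) y x),
      (if prefers (Q i) y x then (-1 : ℤ) else 1)
      = ((univ.filter (fun i => prefers (Q i) x y)).card : ℤ) := by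
    rw [Finset.sum_congr rfl (fun i hi => if_neg (Finset.mem_filter.mp hi).2)]
    rw [Finset.filter_congr (fun i _ => h i)]
    simp
  rw [margin, ← Finset.sum_filter_add_sum_filter_not univ (fun i => prefers (Q i) y x), e1, e2]
  ring

theorem min_feasible_margin {A : Type*} [Fintype A] [DecidableEq A] {n : ℕ}
    (P : Fin n → Pref A) (δ : Fin n → ℕ) (x y : A) (hxy : x ≠ y) :
    IsLeast {z : ℤ | ∃ Q : Fin n → Pref A, (∀ i, dKT (P i) (Q i) ≤ δ i) ∧ z = margin Q x y}
      (∑ i, if prefers (P i) y x ∨ (rank (P i) y : ℤ) - (rank (P i) x : ℤ) ≤ (δ i : ℤ)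
            then (-1 : ℤ) else 1) := by
  classical
  constructor
  · -- membership: construct a feasible profile attaining the value
    have key : ∀ i : Fin n, ∃ q : Pref A, dKT (P i) q ≤ δ i ∧
        ((if prefers (P i) y x ∨ (rank (P i) y : ℤ) - (rank (P i) x : ℤ) ≤ (δ i : ℤ)
            then (-1 : ℤ) else 1) = if prefers q y x then (-1 : ℤ) else 1) := by
      intro i
      by_cases h1 : prefers (P i) y x
      · exact ⟨P i, by simp [dKT_self], by rw [if_pos (Or.inl h1), if_pos h1]⟩
      · have hx : prefers (P i) x y := prefers_of_not (P i) hxy h1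
        by_cases h2 : (rank (P i) y : ℤ) - (rank (P i) x : ℤ) ≤ (δ i : ℤ)
        · obtain ⟨q, hq1, hq2⟩ := exists_flip (P i) hx
          refine ⟨q, le_trans hq2 ?_, by rw [if_pos (Or.inr h2), if_pos hq1]⟩
          simp only [rank] at h2
          have hlt : ((P i) x : ℕ) < ((P i) y : ℕ) := hx
          omega
        · exact ⟨P i, by simp [dKT_self],
            by rw [if_neg (not_or.mpr ⟨h1, h2⟩), if_neg h1]⟩
    choose Q hQ using key
    exact ⟨Q, fun i => (hQ i).1, by
      rw [margin_eq_sum Q hxy]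
      exact Finset.sum_congr rfl (fun i _ => (hQ i).2)⟩
  · -- lower bound
    rintro z ⟨Q, hfeas, rfl⟩
    rw [margin_eq_sum Q hxy]
    refine Finset.sum_le_sum (fun i _ => ?_)
    by_cases hC : prefers (P i) y x ∨ (rank (P i) y : ℤ) - (rank (P i) x : ℤ) ≤ (δ i : ℤ)
    · rw [if_pos hC]
      split_ifs <;> norm_num
    · rw [if_neg hC]
      push_neg at hC
      obtain ⟨h1, h2⟩ := hC
      have hnq : ¬ prefers (Q i) y x := by
        intro hq
        have hx : prefers (P i) x y := prefers_of_not (P i) hxy h1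
        have hge := dKT_ge (P i) (Q i) hx hq
        have hd := hfeas i
        have hlt : ((P i) x : ℕ) < ((P i) y : ℕ) := hx
        simp only [rank] at h2
        push_cast at h2
        omega
      rw [if_neg hnq]
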